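/- arXiv:1503.07030 — 10 statements merged into one kernel-verified Lean document; each statement's English description precedes it below -/
import Mathlib

section
/- For a shelf (S, ◁) and an abelian group A, the rack differential d^k defined by (d^k φ)(a_1,...,a_{k+1}) = Σ_{i=1}^{k} (-1)^{i-1} (φ(a_1,...,a_{i-1}, a_i ◁ a_{i+1}, ..., a_i ◁ a_{k+1}) − φ(a_1,...,a_{i-1}, a_{i+1}, ..., a_{k+1})) satisfies d^{k+1} ∘ d^k = 0. -/
/-- The rack differential `d^k : C^k(S,A) → C^{k+1}(S,A)` of the shelf `(S, op)`:
`(d^k φ)(a_1,…,a_{k+1}) = ∑_{i=1}^k (-1)^{i-1} (φ(a_1,…,a_{i-1}, a_i ◁ a_{i+1},…, a_i ◁ a_{k+1})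
− φ(a_1,…,a_{i-1}, a_{i+1},…,a_{k+1}))` (written with 0-based indexing). -/
def shelfD {S A : Type} [AddCommGroup A] (op : S → S → S) (k : ℕ)
    (φ : (Fin k → S) → A) : (Fin (k + 1) → S) → A := fun a =>
  ∑ i : Fin k, ((-1 : ℤ) ^ (i : ℕ)) •
    (φ (fun j => if (i : ℕ) ≤ (j : ℕ) then op (a i.castSucc) (a j.succ) else a j.castSucc)
      - φ (fun j => if (i : ℕ) ≤ (j : ℕ) then a j.succ else a j.castSucc))

/-- The two families of face maps of the rack complex, bundled by a Boolean `ε`. -/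
def face {S : Type} (op : S → S → S) {k : ℕ} (ε : Bool) (i : Fin k) (a : Fin (k+1) → S) :
    Fin k → S :=
  fun j => if (i : ℕ) ≤ (j : ℕ) then (bif ε then op (a i.castSucc) (a j.succ) else a j.succ)
    else a j.castSucc

/-- The sign attached to a Boolean label. -/
def sgn : Bool → ℤ := fun ε => bif ε then 1 else -1

lemma shelfD_eq_face {S A : Type} [AddCommGroup A] (op : S → S → S) (k : ℕ)
    (φ : (Fin k → S) → A) (a : Fin (k+1) → S) :
    shelfD op k φ a =
      ∑ i : Fin k, ((-1:ℤ)^(i:ℕ)) • (φ (face op true i a) - φ (face op false i a)) := rfl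

lemma shelfD_expand {S A : Type} [AddCommGroup A] (op : S → S → S) (k : ℕ)
    (φ : (Fin k → S) → A) (a : Fin (k+1) → S) :
    shelfD op k φ a =
      ∑ j : Fin k, ∑ δ : Bool, ((-1:ℤ)^(j:ℕ) * sgn δ) • φ (face op δ j a) := by
  rw [shelfD_eq_face]
  refine Finset.sum_congr rfl fun j _ => ?_
  rw [Fintype.sum_bool]
  simp only [sgn, Bool.cond_true, Bool.cond_false, mul_one, mul_neg, neg_smul, smul_sub]
  abel

/-- The quasi-simplicial commutation identity for the face maps, whose hardest case
(`ε = δ = true`) uses self-distributivity. -/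
lemma face_comm {S : Type} (op : S → S → S)
    (sd : ∀ a b c : S, op a (op b c) = op (op a b) (op a c)) {k : ℕ}
    (ε δ : Bool) (i : Fin (k+1)) (j : Fin k) (h : (j:ℕ) < (i:ℕ)) (a : Fin (k+2) → S) :
    face op δ j (face op ε i a) =
      face op ε ⟨(i:ℕ)-1, by omega⟩ (face op δ ⟨(j:ℕ), by omega⟩ a) := by
  have hi' : ((⟨(i:ℕ)-1, by omega⟩ : Fin k).castSucc.succ) = i.castSucc := by
    apply Fin.ext; simp; omega
  have hj' : ((⟨(j:ℕ), by omega⟩ : Fin (k+1)).castSucc) = j.castSucc.castSucc := by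
    apply Fin.ext; simp
  funext m
  simp only [face, Fin.coe_castSucc, Fin.val_succ]
  cases ε <;> cases δ <;> simp only [Bool.cond_true, Bool.cond_false] <;>
    split_ifs <;>
    first
      | rfl
      | omega
      | (rw [hi']; done)
      | (rw [hj']; done)
      | (rw [hj', hi']; done)
      | (rw [hj', hi', ← sd]; done)

/-- The summand of the double differential, indexed by the outer face `(i, ε)` and the
inner face `(j, δ)`. -/
def vv {S A : Type} [AddCommGroup A] (op : S → S → S) (k : ℕ) (φ : (Fin k → S) → A)
    (a : Fin (k+2) → S) (x : Fin (k+1) × Bool × Fin k × Bool) : A :=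
  ((-1:ℤ)^((x.1:ℕ)+(x.2.2.1:ℕ)) * sgn x.2.1 * sgn x.2.2.2) •
    φ (face op x.2.2.2 x.2.2.1 (face op x.2.1 x.1 a))

/-- The sign-reversing involution pairing up the summands of the double differential. -/
def gg (k : ℕ) (x : Fin (k+1) × Bool × Fin k × Bool) : Fin (k+1) × Bool × Fin k × Bool :=
  if h : (x.2.2.1 : ℕ) < (x.1 : ℕ) then
    (⟨(x.2.2.1 : ℕ), by omega⟩, x.2.2.2, ⟨(x.1:ℕ)-1, by omega⟩, x.2.1)
  else
    (⟨(x.2.2.1 : ℕ)+1, by omega⟩, x.2.2.2, ⟨(x.1:ℕ), by omega⟩, x.2.1)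

lemma vv_cancel {S A : Type} [AddCommGroup A] (op : S → S → S)
    (sd : ∀ a b c : S, op a (op b c) = op (op a b) (op a c)) (k : ℕ)
    (φ : (Fin k → S) → A) (a : Fin (k+2) → S) (x : Fin (k+1) × Bool × Fin k × Bool) :
    vv op k φ a x + vv op k φ a (gg k x) = 0 := by
  obtain ⟨i, ε, j, δ⟩ := x
  by_cases h : (j : ℕ) < (i : ℕ)
  · rw [gg, dif_pos h]
    simp only [vv]
    rw [← face_comm op sd ε δ i j h a, ← add_smul]
    have hc : ((-1:ℤ)^((i:ℕ)+(j:ℕ)) * sgn ε * sgn δ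
        + (-1:ℤ)^((j:ℕ)+((i:ℕ)-1)) * sgn δ * sgn ε) = 0 := by
      have he : (i:ℕ)+(j:ℕ) = ((j:ℕ)+((i:ℕ)-1)) + 1 := by omega
      rw [he, pow_succ]; ring
    rw [hc, zero_smul]
  · rw [gg, dif_neg h]
    simp only [vv]
    have key := face_comm op sd δ ε (⟨(j:ℕ)+1, by omega⟩ : Fin (k+1))
      (⟨(i:ℕ), by omega⟩ : Fin k) (by show (i:ℕ) < (j:ℕ)+1; omega) a
    simp only [Fin.eta, Nat.add_sub_cancel] at key
    rw [key, ← add_smul]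
    have hc : ((-1:ℤ)^((i:ℕ)+(j:ℕ)) * sgn ε * sgn δ
        + (-1:ℤ)^(((j:ℕ)+1)+(i:ℕ)) * sgn δ * sgn ε) = 0 := by
      have he : ((j:ℕ)+1)+(i:ℕ) = ((i:ℕ)+(j:ℕ)) + 1 := by omega
      rw [he, pow_succ]; ring
    rw [hc, zero_smul]

lemma gg_ne (k : ℕ) (x : Fin (k+1) × Bool × Fin k × Bool) : gg k x ≠ x := by
  obtain ⟨i, ε, j, δ⟩ := x
  by_cases h : (j : ℕ) < (i : ℕ) <;>
    [rw [gg, dif_pos h]; rw [gg, dif_neg h]] <;>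
    intro e <;>
    have := congrArg (fun y : Fin (k+1) × Bool × Fin k × Bool => (y.1 : ℕ)) e <;>
    simp at this <;> omega

lemma gg_gg (k : ℕ) (x : Fin (k+1) × Bool × Fin k × Bool) : gg k (gg k x) = x := by
  obtain ⟨i, ε, j, δ⟩ := x
  by_cases h : (j : ℕ) < (i : ℕ)
  · have h1 : gg k (i, ε, j, δ)
        = (⟨(j:ℕ), by omega⟩, δ, ⟨(i:ℕ)-1, by omega⟩, ε) := by rw [gg, dif_pos h]
    rw [h1, gg, dif_neg (by simp; omega)]
    refine Prod.ext (Fin.ext ?_) (Prod.ext rfl (Prod.ext (Fin.ext ?_) rfl)) <;> simp <;> omega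
  · have h1 : gg k (i, ε, j, δ)
        = (⟨(j:ℕ)+1, by omega⟩, δ, ⟨(i:ℕ), by omega⟩, ε) := by rw [gg, dif_neg h]
    rw [h1, gg, dif_pos (by simp; omega)]
    refine Prod.ext (Fin.ext ?_) (Prod.ext rfl (Prod.ext (Fin.ext ?_) rfl)) <;> simp

/-- For a shelf `(S, ◁)` and abelian group `A`, the rack differential squares to zero:
`d^{k+1} ∘ d^k = 0`. -/
theorem rack_differential_squares_to_zero {S A : Type} [AddCommGroup A]
    (op : S → S → S)
    (sd : ∀ a b c : S, op a (op b c) = op (op a b) (op a c))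
    (k : ℕ) (φ : (Fin k → S) → A) :
    shelfD op (k + 1) (shelfD op k φ) = 0 := by
  funext a
  show shelfD op (k+1) (shelfD op k φ) a = 0
  have step1 : shelfD op (k+1) (shelfD op k φ) a
      = ∑ x : Fin (k+1) × Bool × Fin k × Bool, vv op k φ a x := by
    rw [shelfD_expand]
    simp only [Fintype.sum_prod_type]
    refine Finset.sum_congr rfl fun i _ => Finset.sum_congr rfl fun ε _ => ?_
    rw [shelfD_expand, Finset.smul_sum]
    refine Finset.sum_congr rfl fun j _ => ?_
    rw [Finset.smul_sum]
    refine Finset.sum_congr rfl fun δ _ => ?_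
    rw [vv, smul_smul]
    congr 1
    rw [pow_add]; ring
  rw [step1]
  exact Finset.sum_ninvolution (gg k) (fun x => vv_cancel op sd k φ a x)
    (fun x _ => gg_ne k x) (fun x => Finset.mem_univ _) (fun x => gg_gg k x)
end

section
/- Let (S, ◁) be a shelf, A an abelian group, φ : S^k → A, and a ∈ S. Then d^k(φ ∘ τ_a^{×k}) = (d^k φ) ∘ τ_a^{×(k+1)}, where τ_a(b) = a ◁ b; i.e., the action of left translations on cochains commutes with the rack differential. -/
/-- The action of left translations on cochains commutes with the rack differential:
`d^k(φ·τ_a) = (d^k φ)·τ_a`, where `(φ·τ_a)(b_1,…,b_k) = φ(a ◁ b_1, …, a ◁ b_k)`. -/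
theorem rack_differential_commutes_translation {S A : Type} [AddCommGroup A]
    (op : S → S → S)
    (sd : ∀ a b c : S, op a (op b c) = op (op a b) (op a c))
    (k : ℕ) (φ : (Fin k → S) → A) (a : S) :
    shelfD op k (fun b => φ (fun j => op a (b j)))
      = fun b => shelfD op k φ (fun j => op a (b j)) := by
  funext b
  unfold shelfD
  refine Finset.sum_congr rfl fun i _ => ?_
  congr 1
  congr 1 <;>
    refine congrArg φ (funext fun j => ?_) <;> beta_reduce <;> split <;> first | exact sd _ _ _ | rfl
end

section
/- Let (S, ◁) be a shelf, A an abelian group, φ : S^k → A, and b ∈ S. Then φ·τ_b − φ = (d^k φ)_b + d^{k-1}(φ_b), where φ_b denotes the partial evaluation (b_1,...,b_{k-1}) ↦ φ(b, b_1,...,b_{k-1}) and φ·τ_b(b_1,...,b_k) = φ(b ◁ b_1,...,b ◁ b_k). -/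
/-- For a shelf `(S, ◁)`, a cochain `φ ∈ C^{k+1}(S,A)` and `b ∈ S`:
`φ·τ_b − φ = (dφ)_b + d(φ_b)`, where `φ_b` is the partial evaluation
`(b_1,…,b_k) ↦ φ(b, b_1,…,b_k)` and `(φ·τ_b)(b_1,…,b_{k+1}) = φ(b ◁ b_1,…,b ◁ b_{k+1})`. -/
theorem translation_minus_id_is_homotopic_to_zero {S A : Type} [AddCommGroup A]
    (op : S → S → S)
    (sd : ∀ a b c : S, op a (op b c) = op (op a b) (op a c))
    (k : ℕ) (φ : (Fin (k + 1) → S) → A) (b : S) :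
    ∀ c : Fin (k + 1) → S,
      φ (fun j => op b (c j)) - φ c
        = shelfD op (k + 1) φ (Fin.cons b c)
          + shelfD op k (fun d => φ (Fin.cons b d)) c := by
  intro c
  unfold shelfD
  rw [Fin.sum_univ_succ]
  have lead : ((-1 : ℤ) ^ ((0 : Fin (k+1)) : ℕ)) •
      (φ (fun j => if ((0 : Fin (k+1)) : ℕ) ≤ (j : ℕ) then
          op (((Fin.cons b c : Fin (k+2) → S)) (0 : Fin (k+1)).castSucc) (((Fin.cons b c : Fin (k+2) → S)) j.succ)
        else ((Fin.cons b c : Fin (k+2) → S)) j.castSucc)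
      - φ (fun j => if ((0 : Fin (k+1)) : ℕ) ≤ (j : ℕ) then ((Fin.cons b c : Fin (k+2) → S)) j.succ
        else ((Fin.cons b c : Fin (k+2) → S)) j.castSucc))
      = φ (fun j => op b (c j)) - φ c := by
    simp [Fin.cons_succ]
  rw [lead]
  have cancel : ∀ i : Fin k,
      (((-1 : ℤ) ^ (((i.succ : Fin (k+1))) : ℕ)) •
        (φ (fun j => if ((i.succ : Fin (k+1)) : ℕ) ≤ (j : ℕ) then
            op (((Fin.cons b c : Fin (k+2) → S)) (i.succ : Fin (k+1)).castSucc) (((Fin.cons b c : Fin (k+2) → S)) j.succ)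
          else ((Fin.cons b c : Fin (k+2) → S)) j.castSucc)
        - φ (fun j => if ((i.succ : Fin (k+1)) : ℕ) ≤ (j : ℕ) then ((Fin.cons b c : Fin (k+2) → S)) j.succ
          else ((Fin.cons b c : Fin (k+2) → S)) j.castSucc)))
      + ((-1 : ℤ) ^ ((i : Fin k) : ℕ)) •
        (φ (Fin.cons b (fun j => if ((i : Fin k) : ℕ) ≤ (j : ℕ) then op (c i.castSucc) (c j.succ)
            else c j.castSucc))
        - φ (Fin.cons b (fun j => if ((i : Fin k) : ℕ) ≤ (j : ℕ) then c j.succ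
            else c j.castSucc))) = 0 := by
    intro i
    have e1 : (fun j : Fin (k+1) => if ((i.succ : Fin (k+1)) : ℕ) ≤ (j : ℕ) then
            op (((Fin.cons b c : Fin (k+2) → S)) (i.succ : Fin (k+1)).castSucc) (((Fin.cons b c : Fin (k+2) → S)) j.succ)
          else ((Fin.cons b c : Fin (k+2) → S)) j.castSucc)
        = Fin.cons b (fun j => if ((i : Fin k) : ℕ) ≤ (j : ℕ) then op (c i.castSucc) (c j.succ)
            else c j.castSucc) := by
      funext j
      induction j using Fin.cases with
      | zero => simp
      | succ j =>
        simp only [Fin.cons_succ, Fin.val_succ, ← Fin.succ_castSucc, Fin.cons_succ]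
        rcases le_or_gt ((i : ℕ)) ((j : ℕ)) with h | h
        · rw [if_pos (by omega), if_pos (by omega)]
        · rw [if_neg (by omega), if_neg (by omega)]
    have e2 : (fun j : Fin (k+1) => if ((i.succ : Fin (k+1)) : ℕ) ≤ (j : ℕ) then
            ((Fin.cons b c : Fin (k+2) → S)) j.succ else ((Fin.cons b c : Fin (k+2) → S)) j.castSucc)
        = Fin.cons b (fun j => if ((i : Fin k) : ℕ) ≤ (j : ℕ) then c j.succ
            else c j.castSucc) := by
      funext j
      induction j using Fin.cases with
      | zero => simp
      | succ j =>
        simp only [Fin.cons_succ, Fin.val_succ, ← Fin.succ_castSucc, Fin.cons_succ]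
        rcases le_or_gt ((i : ℕ)) ((j : ℕ)) with h | h
        · rw [if_pos (by omega), if_pos (by omega)]
        · rw [if_neg (by omega), if_neg (by omega)]
    rw [e1, e2]
    have : ((-1 : ℤ) ^ (((i.succ : Fin (k+1))) : ℕ)) = -((-1 : ℤ) ^ ((i : Fin k) : ℕ)) := by
      simp [pow_succ]
    rw [this, neg_smul, neg_add_cancel]
  have : (∑ i : Fin k, (((-1 : ℤ) ^ (((i.succ : Fin (k+1))) : ℕ)) •
        (φ (fun j => if ((i.succ : Fin (k+1)) : ℕ) ≤ (j : ℕ) then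
            op (((Fin.cons b c : Fin (k+2) → S)) (i.succ : Fin (k+1)).castSucc) (((Fin.cons b c : Fin (k+2) → S)) j.succ)
          else ((Fin.cons b c : Fin (k+2) → S)) j.castSucc)
        - φ (fun j => if ((i.succ : Fin (k+1)) : ℕ) ≤ (j : ℕ) then ((Fin.cons b c : Fin (k+2) → S)) j.succ
          else ((Fin.cons b c : Fin (k+2) → S)) j.castSucc))))
      + ∑ i : Fin k, ((-1 : ℤ) ^ ((i : Fin k) : ℕ)) •
        (φ (Fin.cons b (fun j => if ((i : Fin k) : ℕ) ≤ (j : ℕ) then op (c i.castSucc) (c j.succ)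
            else c j.castSucc))
        - φ (Fin.cons b (fun j => if ((i : Fin k) : ℕ) ≤ (j : ℕ) then c j.succ
            else c j.castSucc))) = 0 := by
    rw [← Finset.sum_add_distrib]
    exact Finset.sum_eq_zero fun i _ => cancel i
  rw [add_assoc, this, add_zero]
end

section
/- Every finite shelf (S, ◁) admits a rack retract, i.e., a retract S' on which the restricted operation ◁ makes S' a rack (all left translations b ↦ a ◁ b with a ∈ S' are bijections of S'). -/
/-- The translation semigroup `T_S` of a shelf `(S, op)`:
the subsemigroup of `Function.End S` generated by the left translations `τ_a : b ↦ a ◁ b`. -/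
def transSemigroup {S : Type} (op : S → S → S) : Subsemigroup (Function.End S) :=
  Subsemigroup.closure (Set.range (fun a => (fun b => op a b : Function.End S)))

/-- `S'` is a retract of the shelf `(S, op)`: it is a subshelf and there is a retraction
`t ∈ T_S` with `t(S) = S'` fixing `S'` pointwise. -/
def IsRetractOf {S : Type} (op : S → S → S) (S' : Set S) : Prop :=
  (∀ x ∈ S', ∀ y ∈ S', op x y ∈ S') ∧
    ∃ t ∈ transSemigroup op, Set.range t = S' ∧ ∀ b ∈ S', t b = b

/-- Every element of the translation semigroup is a shelf endomorphism. -/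
lemma transSemigroup_hom {S : Type} (op : S → S → S)
    (sd : ∀ a b c : S, op a (op b c) = op (op a b) (op a c))
    {t : Function.End S} (ht : t ∈ transSemigroup op) :
    ∀ b c, t (op b c) = op (t b) (t c) := by
  induction ht using Subsemigroup.closure_induction with
  | mem x hx =>
    obtain ⟨a, rfl⟩ := hx
    intro b c
    exact sd a b c
  | mul x y hx hy px py =>
    intro b c
    show x (y (op b c)) = op (x (y b)) (x (y c))
    rw [py, px]

lemma pow_mem_transSemigroup {S : Type} (op : S → S → S)
    {t : Function.End S} (ht : t ∈ transSemigroup op) (n : ℕ) :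
    t ^ (n + 1) ∈ transSemigroup op := by
  induction n with
  | zero => simpa using ht
  | succ k ih => rw [pow_succ]; exact mul_mem ih ht

/-- In a finite monoid every element has an idempotent positive power. -/
lemma exists_idempotent_pow {M : Type*} [Monoid M] [Finite M] (a : M) :
    ∃ n, 0 < n ∧ a ^ n * a ^ n = a ^ n := by
  obtain ⟨i, j, hij, h⟩ := Finite.exists_ne_map_eq_of_infinite (fun n : ℕ => a ^ (n + 1))
  wlog hlt : i < j generalizing i j
  · exact this j i hij.symm h.symm (by omega)
  set m := i + 1 with hm
  set p := j - i with hp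
  have hp0 : 0 < p := by omega
  have key : a ^ (m + p) = a ^ m := by
    have : j + 1 = m + p := by omega
    rw [← this]; exact h.symm
  have step : ∀ k, m ≤ k → a ^ (k + p) = a ^ k := by
    intro k hk
    have : a ^ (k + p) = a ^ (k - m) * a ^ (m + p) := by
      rw [← pow_add]; congr 1; omega
    rw [this, key, ← pow_add]
    congr 1; omega
  have iter : ∀ l k, m ≤ k → a ^ (k + l * p) = a ^ k := by
    intro l
    induction l with
    | zero => simp
    | succ l ih =>
      intro k hk
      have : k + (l + 1) * p = (k + l * p) + p := by ring
      rw [this, step _ (by omega), ih _ hk]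
  refine ⟨m * p, by positivity, ?_⟩
  rw [← pow_add]
  have : m * p + m * p = m * p + m * p := rfl
  calc a ^ (m * p + m * p) = a ^ (m * p) := by
        have hmp : m ≤ m * p := Nat.le_mul_of_pos_right m hp0
        exact iter m (m * p) hmp

/-- Every finite (nonempty) shelf admits a rack retract: a retract `S'` on which all left
translations by elements of `S'` are bijections of `S'`. -/
theorem finite_shelf_has_rack_retract {S : Type} [Finite S] [Nonempty S]
    (op : S → S → S)
    (sd : ∀ a b c : S, op a (op b c) = op (op a b) (op a c)) :
    ∃ S' : Set S, IsRetractOf op S' ∧ ∀ a ∈ S', Set.BijOn (fun b => op a b) S' S' := by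
  set T := transSemigroup op with hT
  -- the set of ranks of elements of T
  set P : Set ℕ := {n | ∃ t ∈ T, (Set.range (t : S → S)).ncard = n} with hP
  have hPne : P.Nonempty := by
    obtain ⟨a⟩ := ‹Nonempty S›
    exact ⟨_, (fun b => op a b : Function.End S),
      Subsemigroup.subset_closure ⟨a, rfl⟩, rfl⟩
  obtain ⟨t0, ht0T, ht0rank⟩ := Nat.sInf_mem hPne
  have hmin : ∀ s ∈ T, sInf P ≤ (Set.range (s : S → S)).ncard := fun s hs =>
    Nat.sInf_le ⟨s, hs, rfl⟩
  -- idempotent power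
  haveI : Finite (Function.End S) := inferInstanceAs (Finite (S → S))
  obtain ⟨n, hn0, hidem⟩ := exists_idempotent_pow t0
  obtain ⟨k, rfl⟩ : ∃ k, n = k + 1 := ⟨n - 1, by omega⟩
  set e : Function.End S := t0 ^ (k + 1) with he
  have heT : e ∈ T := by
    exact pow_mem_transSemigroup op ht0T k
  have hefix : ∀ x, e (e x) = e x := by
    intro x
    have : (e * e) x = e x := by rw [hidem]
    exact this
  set S' : Set S := Set.range (e : S → S) with hS'
  have hS'fix : ∀ b ∈ S', e b = b := by
    rintro b ⟨y, rfl⟩; exact hefix y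
  have hehom := transSemigroup_hom op sd heT
  -- closure
  have hclosed : ∀ x ∈ S', ∀ y ∈ S', op x y ∈ S' := by
    intro x hx y hy
    exact ⟨op x y, by rw [hehom, hS'fix x hx, hS'fix y hy]⟩
  have hfin : S'.Finite := Set.toFinite _
  -- ranks : range e ⊆ range t0, so ncard S' ≤ ncard range t0 = sInf P ≤ ncard S'
  have hsub : S' ⊆ Set.range (t0 : S → S) := by
    rintro x ⟨y, rfl⟩
    have : e y = t0 ((t0 ^ k) y) := by
      show (t0 ^ (k + 1)) y = (t0 * t0 ^ k) y
      rw [pow_succ']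
    exact ⟨_, this.symm⟩
  have hcard : S'.ncard = sInf P := by
    have h1 : S'.ncard ≤ (Set.range (t0 : S → S)).ncard :=
      Set.ncard_le_ncard hsub (Set.toFinite _)
    have h2 : sInf P ≤ S'.ncard := hmin e heT
    omega
  -- surjectivity of translations on S'
  refine ⟨S', ⟨hclosed, e, heT, rfl, hS'fix⟩, ?_⟩
  intro a ha
  have hmaps : Set.MapsTo (fun b => op a b) S' S' := fun y hy => hclosed a ha y hy
  have hsurj : Set.SurjOn (fun b => op a b) S' S' := by
    intro x hx
    -- consider s = e * τ_a ∈ T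
    set τ : Function.End S := fun b => op a b with hτ
    set s : Function.End S := e * τ with hs
    have hsT : s ∈ T := mul_mem heT (Subsemigroup.subset_closure ⟨a, rfl⟩)
    have hssub : Set.range (s : S → S) ⊆ S' := by
      rintro z ⟨y, rfl⟩; exact ⟨op a y, rfl⟩
    have hseq : Set.range (s : S → S) = S' := by
      apply Set.eq_of_subset_of_ncard_le hssub _ hfin
      rw [hcard]
      exact hmin s hsT
    have hx' : x ∈ Set.range (s : S → S) := hseq ▸ hx
    obtain ⟨y, hy⟩ := hx'
    have : s y = op a (e y) := by
      show e (op a y) = op a (e y)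
      rw [hehom, hS'fix a ha]
    exact ⟨e y, ⟨y, rfl⟩, by show op a (e y) = x; rw [← this, hy]⟩
  exact ((hfin.surjOn_iff_bijOn_of_mapsTo hmaps).mp hsurj)
end

section
/- Let S' be a retract of a shelf (S, ◁) with retraction t ∈ T_S. Then the map sending each orbit of S to the orbit of S' containing its image under t is a well-defined bijection between the orbit set of S and the orbit set of S'; moreover the preimage under t of any orbit of S' is contained in a single orbit of S. -/
def orbRel {S : Type} (op : S → S → S) : S → S → Prop :=
  Relation.EqvGen (fun x y => ∃ b, y = op b x)

lemma trans_hom {S : Type} (op : S → S → S)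
    (sd : ∀ a b c : S, op a (op b c) = op (op a b) (op a c))
    (t : Function.End S) (ht : t ∈ transSemigroup op) :
    ∀ b x, t (op b x) = op (t b) (t x) := by
  induction ht using Subsemigroup.closure_induction with
  | mem f hf =>
    obtain ⟨a, rfl⟩ := hf
    intro b x
    exact sd a b x
  | mul f g _ _ hf hg =>
    intro b x
    show f (g (op b x)) = op (f (g b)) (f (g x))
    rw [hg, hf]

lemma trans_orb {S : Type} (op : S → S → S)
    (t : Function.End S) (ht : t ∈ transSemigroup op) :
    ∀ z, orbRel op z (t z) := by
  induction ht using Subsemigroup.closure_induction with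
  | mem f hf =>
    obtain ⟨a, rfl⟩ := hf
    intro z
    exact Relation.EqvGen.rel _ _ ⟨a, rfl⟩
  | mul f g _ _ hf hg =>
    intro z
    exact Relation.EqvGen.trans _ _ _ (hg z) (hf (g z))

/-- Let `S'` be a retract of a shelf `(S, ◁)` with retraction `t`.  Then the map sending
each orbit of `S` to the orbit of `S'` containing its image under `t` is a well-defined
bijection between the orbit sets, and the preimage under `t` of any orbit of `S'` is
contained in a single orbit of `S`. -/
theorem retract_orbit_bijection {S : Type} (op : S → S → S)
    (sd : ∀ a b c : S, op a (op b c) = op (op a b) (op a c))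
    (S' : Set S) (hS' : ∀ x ∈ S', ∀ y ∈ S', op x y ∈ S')
    (t : Function.End S) (ht : t ∈ transSemigroup op)
    (hmem : ∀ x, t x ∈ S') (hrange : Set.range t = S') (hfix : ∀ b ∈ S', t b = b) :
    (∃ F : Quot (orbRel op) →
        Quot (orbRel (fun x y : S' => (⟨op x.1 y.1, hS' x.1 x.2 y.1 y.2⟩ : S'))),
      (∀ x : S, F (Quot.mk _ x) = Quot.mk _ (⟨t x, hmem x⟩ : S'))
        ∧ Function.Bijective F)
      ∧ ∀ x y : S,
          orbRel (fun x y : S' => (⟨op x.1 y.1, hS' x.1 x.2 y.1 y.2⟩ : S'))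
            ⟨t x, hmem x⟩ ⟨t y, hmem y⟩ → orbRel op x y := by
  set op' := (fun x y : S' => (⟨op x.1 y.1, hS' x.1 x.2 y.1 y.2⟩ : S')) with hop'
  have hxt : ∀ x, orbRel op x (t x) := trans_orb op t ht
  -- orbit relation in S' implies orbit relation in S
  have back : ∀ u v : S', orbRel op' u v → orbRel op u.1 v.1 := by
    intro u v h
    induction h with
    | rel a b hab =>
      obtain ⟨c, hc⟩ := hab
      exact Relation.EqvGen.rel _ _ ⟨c.1, by rw [hc]⟩
    | refl a => exact Relation.EqvGen.refl _
    | symm a b _ ih => exact Relation.EqvGen.symm _ _ ih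
    | trans a b c _ _ ih1 ih2 => exact Relation.EqvGen.trans _ _ _ ih1 ih2
  have part2 : ∀ x y : S, orbRel op' ⟨t x, hmem x⟩ ⟨t y, hmem y⟩ → orbRel op x y := by
    intro x y h
    exact Relation.EqvGen.trans _ _ _ (hxt x)
      (Relation.EqvGen.trans _ _ _ (back _ _ h) (Relation.EqvGen.symm _ _ (hxt y)))
  refine ⟨⟨Quot.lift (fun x => Quot.mk (orbRel op') ⟨t x, hmem x⟩) ?_, fun x => rfl, ?_, ?_⟩, part2⟩
  · intro x y h
    induction h with
    | rel a b hab =>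
      obtain ⟨c, rfl⟩ := hab
      refine Quot.sound (Relation.EqvGen.rel _ _ ⟨⟨t c, hmem c⟩, ?_⟩)
      exact Subtype.ext (trans_hom op sd t ht c a)
    | refl a => rfl
    | symm a b _ ih => exact ih.symm
    | trans a b c _ _ ih1 ih2 => exact ih1.trans ih2
  · -- injective
    intro q1 q2
    induction q1 using Quot.ind with | _ x =>
    induction q2 using Quot.ind with | _ y =>
    intro h
    have h' := Quot.eqvGen_exact h
    exact Quot.sound (part2 x y
      (((Relation.EqvGen.is_equivalence _).eqvGen_iff).mp h'))
  · -- surjective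
    intro q
    induction q using Quot.ind with | _ s =>
    refine ⟨Quot.mk _ s.1, ?_⟩
    show Quot.mk (orbRel op') ⟨t s.1, hmem s.1⟩ = Quot.mk _ s
    congr 1
    exact Subtype.ext (hfix s.1 s.2)
end

section
/- The free monogenic shelf F_1 admits no semi-strong projector over any nonzero commutative ring R: there is no nonzero element P of the semigroup algebra R[T_{F_1}] satisfying P·τ_a = P for all a ∈ F_1. (Key lemma: there is a length function l : F_1 → ℕ with l(γ) = 1 for the generator γ and l(a ◁ b) = l(b) + 1 for all a, b, so every translation τ_a raises length by exactly 1.) -/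
/-- The free monogenic shelf `F_1` (here characterized by its universal property: for each
shelf `(S', ◁')` and `s ∈ S'` there is a unique shelf morphism `F_1 → S'` with `γ ↦ s`)
admits no semi-strong projector over any nonzero commutative ring `R`:
no nonzero `P` in the semigroup algebra `R[T_{F_1}]` satisfies `P·τ_a = P` for all `a`. -/
theorem free_shelf_no_semistrong_projector {F : Type} (op : F → F → F)
    (sd : ∀ a b c : F, op a (op b c) = op (op a b) (op a c)) (γ : F)
    (hfree : ∀ (S : Type) (op' : S → S → S),
      (∀ a b c : S, op' a (op' b c) = op' (op' a b) (op' a c)) →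
      ∀ s : S, ∃! f : F → S, f γ = s ∧ ∀ a b : F, f (op a b) = op' (f a) (f b))
    (R : Type) [CommRing R] [Nontrivial R]
    (P : MonoidAlgebra R (transSemigroup op))
    (hP : ∀ a : F,
      P * MonoidAlgebra.single
        (⟨(fun b => op a b : Function.End F),
          Subsemigroup.subset_closure ⟨a, rfl⟩⟩ : transSemigroup op) (1 : R) = P) :
    P = 0 := by
  classical
  by_contra hPne
  obtain ⟨f, ⟨hγ, hop⟩, -⟩ := hfree ℕ (fun _ b => b + 1) (fun _ _ _ => rfl) 1
  -- every element of the translation semigroup raises `f` by a fixed positive amount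
  have key : ∀ t : Function.End F, t ∈ transSemigroup op →
      ∃ k : ℕ, 1 ≤ k ∧ ∀ b, f (t b) = f b + k := by
    intro t ht
    refine Subsemigroup.closure_induction (p := fun t _ => ∃ k : ℕ, 1 ≤ k ∧ ∀ b, f (t b) = f b + k)
      ?_ ?_ ht
    · rintro x ⟨a, rfl⟩
      exact ⟨1, le_refl 1, fun b => hop a b⟩
    · rintro x y _ _ ⟨k, hk, hx⟩ ⟨m, hm, hy⟩
      refine ⟨m + k, le_trans hm (Nat.le_add_right m k), fun b => ?_⟩
      show f (x (y b)) = f b + (m + k)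
      rw [hx, hy, add_assoc]
  have hne : P.coeff.support.Nonempty := Finsupp.support_nonempty_iff.mpr (MonoidAlgebra.coeff_eq_zero.not.mpr hPne)
  obtain ⟨t₀, ht₀, hmin⟩ := P.coeff.support.exists_min_image (fun t => f (t.1 γ)) hne
  set τγ : transSemigroup op :=
    ⟨(fun b => op γ b : Function.End F), Subsemigroup.subset_closure ⟨γ, rfl⟩⟩ with hτγ
  have ht₀' : t₀ ∈ (P * MonoidAlgebra.single τγ (1 : R)).coeff.support := by
    rw [hP γ]; exact ht₀
  have hsub := MonoidAlgebra.support_coeff_mul_subset P (MonoidAlgebra.single τγ (1 : R)) ht₀'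
  rw [MonoidAlgebra.coeff_single, Finsupp.support_single_ne_zero τγ (one_ne_zero)] at hsub
  obtain ⟨s, hs, u, hu, hsu⟩ := Finset.mem_mul.mp hsub
  have hu' : u = τγ := Finset.mem_singleton.mp hu
  subst hu'
  obtain ⟨k, hk, hks⟩ := key s.1 s.2
  have hval : f (t₀.1 γ) = f (op γ γ) + k := by
    rw [← hsu]; exact hks _
  have hsγ : f (s.1 γ) = f γ + k := hks γ
  have := hmin s hs
  rw [hval, hsγ, hop γ γ, hγ] at this
  omega
end

section
/- Let (S, ◁) be a shelf, φ : S^k → A a cochain invariant under all translations (φ(a ◁ b_1, ..., a ◁ b_k) = φ(b_1,...,b_k) for all a ∈ S), and b ∈ S. Then (d^k φ)_b = −d^{k-1}(φ_b) + (φ·τ_b − φ) = −d^{k-1}(φ_b); in particular, if additionally φ·τ_b = φ, the partial evaluation of the coboundary satisfies (d^k φ)_b = −d^{k-1}(φ_b). -/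
/-- For an `S`-invariant cochain `φ` (i.e. `φ·τ_a = φ` for all `a`), the partial
evaluation of its coboundary satisfies `(d φ)_b = −d(φ_b)`. -/
theorem invariant_coboundary_partial_evaluation {S A : Type} [AddCommGroup A]
    (op : S → S → S)
    (sd : ∀ a b c : S, op a (op b c) = op (op a b) (op a c))
    (k : ℕ) (φ : (Fin (k + 1) → S) → A)
    (hinv : ∀ a : S, (fun b : Fin (k + 1) → S => φ (fun j => op a (b j))) = φ)
    (b : S) :
    ∀ c : Fin (k + 1) → S,
      shelfD op (k + 1) φ (Fin.cons b c)
        = - shelfD op k (fun d => φ (Fin.cons b d)) c := by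
  intro c
  unfold shelfD
  rw [Fin.sum_univ_succ]
  have hz : φ (fun j => op b (c j)) = φ c := congrFun (hinv b) c
  simp only [Fin.val_zero, Nat.zero_le, if_true, Fin.castSucc_zero, Fin.cons_zero,
    Fin.cons_succ, pow_zero, one_smul]
  rw [show φ (fun j => c j) = φ c from rfl, hz, sub_self, zero_add, ← Finset.sum_neg_distrib]
  refine Finset.sum_congr rfl ?_
  intro i _
  have hA : (fun j : Fin (k+1) => if ((i.succ : Fin (k+1)):ℕ) ≤ (j:ℕ) then op ((Fin.cons b c : Fin (k+1+1) → S) (i.succ).castSucc) (c j) else (Fin.cons b c : Fin (k+1+1) → S) j.castSucc)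
      = Fin.cons b (fun j : Fin k => if (i:ℕ) ≤ (j:ℕ) then op (c i.castSucc) (c j.succ) else c j.castSucc) := by
    funext j
    refine Fin.cases ?_ (fun j' => ?_) j
    · simp
    · simp only [Fin.cons_succ, Fin.val_succ, Nat.succ_le_succ_iff, ← Fin.succ_castSucc,
        Fin.cons_succ]
  have hB : (fun j : Fin (k+1) => if ((i.succ : Fin (k+1)):ℕ) ≤ (j:ℕ) then c j else (Fin.cons b c : Fin (k+1+1) → S) j.castSucc)
      = Fin.cons b (fun j : Fin k => if (i:ℕ) ≤ (j:ℕ) then c j.succ else c j.castSucc) := by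
    funext j
    refine Fin.cases ?_ (fun j' => ?_) j
    · simp
    · simp only [Fin.cons_succ, Fin.val_succ, Nat.succ_le_succ_iff, ← Fin.succ_castSucc,
        Fin.cons_succ]
  rw [hA, hB, Fin.val_succ, pow_succ]
  ring_nf
  simp [mul_smul]
end

section
/- For the cyclic rack C_{0,m} = (ℤ/m, a ◁ b = b + 1) and k ≥ 2 written as 2s or 2s+1, the map φ⁰(b_1,...,b_k) = 1 if b_2 = b_4 = ... = b_{2s} = m−1 (i.e., all even-indexed entries equal m−1) and 0 otherwise, is a k-cocycle: d^k φ⁰ = 0, where d^k is the rack differential with integer coefficients. -/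
/-- For the cyclic rack `C_{0,m} = (ℤ/m, a ◁ b = b+1)` and `k ≥ 2` written as `2s` or
`2s+1`, the indicator `φ⁰` of tuples whose even-indexed entries `b_2, b_4, …, b_{2s}`
(1-based) all equal `m − 1` is a `k`-cocycle: `d^k φ⁰ = 0`. -/
theorem cyclic_rack_cocycle (m : ℕ) (hm : 1 ≤ m) (k s : ℕ) (hk : 2 ≤ k)
    (hs : k = 2 * s ∨ k = 2 * s + 1) :
    shelfD (fun _ b => b + 1) k
      (fun b : Fin k → ZMod m =>
        if ∀ i : Fin k, (i : ℕ) % 2 = 1 → b i = ((m - 1 : ℕ) : ZMod m)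
        then (1 : ℤ) else 0) = 0 := by
  clear hm hs
  funext a
  simp only [shelfD, Pi.zero_apply]
  set φ : (Fin k → ZMod m) → ℤ := fun b =>
    if ∀ i : Fin k, (i : ℕ) % 2 = 1 → b i = ((m - 1 : ℕ) : ZMod m) then (1 : ℤ) else 0
    with hφ
  have phi_congr : ∀ b b' : Fin k → ZMod m,
      (∀ j : Fin k, (j : ℕ) % 2 = 1 → b j = b' j) → φ b = φ b' := by
    intro b b' h
    simp only [hφ]
    congr 1
    simp only [eq_iff_iff]
    constructor <;> intro H j hj
    · rw [← h j hj]; exact H j hj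
    · rw [h j hj]; exact H j hj
  have shift : ∀ (e e' : Fin k), (e : ℕ) % 2 = 0 → (e' : ℕ) = (e : ℕ) + 1 →
      ∀ X Y : Fin k → ZMod m,
      φ (fun j => if (e : ℕ) ≤ (j : ℕ) then X j else Y j)
        = φ (fun j => if (e' : ℕ) ≤ (j : ℕ) then X j else Y j) := by
    intro e e' he he' X Y
    apply phi_congr
    intro j hj
    have hiff : ((e : ℕ) ≤ (j : ℕ)) ↔ ((e' : ℕ) ≤ (j : ℕ)) := by
      rw [he']
      constructor
      · intro h
        rcases lt_or_eq_of_le h with h' | h'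
        · exact h'
        · omega
      · omega
    simp only [hiff]
  -- the cancellation of a consecutive pair
  have main : ∀ (e e' : Fin k), (e : ℕ) % 2 = 0 → (e' : ℕ) = (e : ℕ) + 1 →
      ((-1 : ℤ) ^ (e : ℕ)) •
        (φ (fun j => if (e : ℕ) ≤ (j : ℕ) then a j.succ + 1 else a j.castSucc)
          - φ (fun j => if (e : ℕ) ≤ (j : ℕ) then a j.succ else a j.castSucc))
      + ((-1 : ℤ) ^ (e' : ℕ)) •
        (φ (fun j => if (e' : ℕ) ≤ (j : ℕ) then a j.succ + 1 else a j.castSucc)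
          - φ (fun j => if (e' : ℕ) ≤ (j : ℕ) then a j.succ else a j.castSucc)) = 0 := by
    intro e e' he he'
    rw [← shift e e' he he' (fun j => a j.succ + 1) (fun j => a j.castSucc),
        ← shift e e' he he' (fun j => a j.succ) (fun j => a j.castSucc), he',
        pow_succ]
    simp only [smul_eq_mul]
    ring
  -- the term at the fixed point vanishes
  have fixzero : ∀ (i : Fin k), (i : ℕ) % 2 = 0 → ¬ ((i : ℕ) + 1 < k) →
      ((-1 : ℤ) ^ (i : ℕ)) •
        (φ (fun j => if (i : ℕ) ≤ (j : ℕ) then a j.succ + 1 else a j.castSucc)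
          - φ (fun j => if (i : ℕ) ≤ (j : ℕ) then a j.succ else a j.castSucc)) = 0 := by
    intro i hpar h2
    have hz : φ (fun j => if (i : ℕ) ≤ (j : ℕ) then a j.succ + 1 else a j.castSucc)
        = φ (fun j => if (i : ℕ) ≤ (j : ℕ) then a j.succ else a j.castSucc) := by
      apply phi_congr
      intro j hj
      have hne : ¬ ((i : ℕ) ≤ (j : ℕ)) := by
        have := j.isLt
        omega
      simp only [if_neg hne]
    rw [hz, sub_self, smul_zero]
  set g : Fin k → Fin k := fun i =>
    if (i : ℕ) % 2 = 1 then ⟨(i : ℕ) - 1, lt_of_le_of_lt (Nat.sub_le _ _) i.isLt⟩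
    else if h2 : (i : ℕ) + 1 < k then ⟨(i : ℕ) + 1, h2⟩ else i
    with hg
  refine Finset.sum_ninvolution g ?_ ?_ (fun i => Finset.mem_univ _) ?_
  · intro i
    rcases Nat.even_or_odd (i : ℕ) with hpar | hpar
    · have hpar' : (i : ℕ) % 2 = 0 := Nat.even_iff.mp hpar
      by_cases h2 : (i : ℕ) + 1 < k
      · have hgi : g i = ⟨(i : ℕ) + 1, h2⟩ := by simp [hg, hpar', h2]
        rw [hgi]
        exact main i ⟨(i : ℕ) + 1, h2⟩ hpar' rfl
      · have hgi : g i = i := by simp [hg, hpar', h2]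
        rw [hgi, fixzero i hpar' h2, add_zero]
    · have hpar' : (i : ℕ) % 2 = 1 := Nat.odd_iff.mp hpar
      have hlt : (i : ℕ) - 1 < k := lt_of_le_of_lt (Nat.sub_le _ _) i.isLt
      have hgi : g i = ⟨(i : ℕ) - 1, hlt⟩ := by simp [hg, hpar']
      rw [hgi, add_comm]
      exact main ⟨(i : ℕ) - 1, hlt⟩ i (by simp only []; omega) (by simp only []; omega)
  · intro i hfi
    rcases Nat.even_or_odd (i : ℕ) with hpar | hpar
    · have hpar' : (i : ℕ) % 2 = 0 := Nat.even_iff.mp hpar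
      by_cases h2 : (i : ℕ) + 1 < k
      · have hgi : g i = ⟨(i : ℕ) + 1, h2⟩ := by simp [hg, hpar', h2]
        rw [hgi]
        intro hcon
        have := congrArg Fin.val hcon
        simp at this
      · exact absurd (fixzero i hpar' h2) hfi
    · have hpar' : (i : ℕ) % 2 = 1 := Nat.odd_iff.mp hpar
      have hlt : (i : ℕ) - 1 < k := lt_of_le_of_lt (Nat.sub_le _ _) i.isLt
      have hgi : g i = ⟨(i : ℕ) - 1, hlt⟩ := by simp [hg, hpar']
      rw [hgi]
      intro hcon
      have := congrArg Fin.val hcon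
      simp at this
      omega
  · intro i
    rcases Nat.even_or_odd (i : ℕ) with hpar | hpar
    · have hpar' : (i : ℕ) % 2 = 0 := Nat.even_iff.mp hpar
      by_cases h2 : (i : ℕ) + 1 < k
      · have hgi : g i = ⟨(i : ℕ) + 1, h2⟩ := by simp [hg, hpar', h2]
        rw [hgi]
        have ho : ((⟨(i : ℕ) + 1, h2⟩ : Fin k) : ℕ) % 2 = 1 := by
          show ((i : ℕ) + 1) % 2 = 1; omega
        simp only [hg, if_pos ho]
        ext
        show (i : ℕ) + 1 - 1 = (i : ℕ)
        omega
      · have hgi : g i = i := by simp [hg, hpar', h2]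
        rw [hgi, hgi]
    · have hpar' : (i : ℕ) % 2 = 1 := Nat.odd_iff.mp hpar
      have hlt : (i : ℕ) - 1 < k := lt_of_le_of_lt (Nat.sub_le _ _) i.isLt
      have hgi : g i = ⟨(i : ℕ) - 1, hlt⟩ := by simp [hg, hpar']
      rw [hgi]
      have h0 : ¬ (((⟨(i : ℕ) - 1, hlt⟩ : Fin k) : ℕ) % 2 = 1) := by
        show ¬ (((i : ℕ) - 1) % 2 = 1); omega
      have h2 : ((⟨(i : ℕ) - 1, hlt⟩ : Fin k) : ℕ) + 1 < k := by
        show (i : ℕ) - 1 + 1 < k; omega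
      simp only [hg, if_neg h0, dif_pos h2]
      ext
      show (i : ℕ) - 1 + 1 = (i : ℕ)
      omega
end

section
/- For the cyclic rack C_{0,m} (m ≥ 1), k ≥ 0 written as 2s or 2s+1, and any coboundary φ = d^{k-1}ψ with integer coefficients, one has Σ_{b ∈ D_{m,k}} φ(b) = 0, where D_{m,k} = { b ∈ {0,...,m−1}^k : b_1 = b_2 + 1 mod m, b_3 = b_4 + 1 mod m, ..., b_{2s−1} = b_{2s} + 1 mod m, and b_{2s+1} = 0 if k = 2s+1 }. -/
private def sig (m k : ℕ) (c : ZMod m) (n : ℕ) (b : Fin (k + 1) → ZMod m) :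
    Fin (k + 1) → ZMod m :=
  fun j => if (j : ℕ) = n ∨ (j : ℕ) = n + 1 then b j + c else b j

private def Pm (m k : ℕ) (n : ℕ) (b : Fin (k + 1) → ZMod m) : Fin k → ZMod m :=
  fun j => if n ≤ (j : ℕ) then b j.succ + 1 else b j.castSucc

private def Qm (m k : ℕ) (n : ℕ) (b : Fin (k + 1) → ZMod m) : Fin k → ZMod m :=
  fun j => if n ≤ (j : ℕ) then b j.succ else b j.castSucc

private lemma sig_sig (m k : ℕ) (c : ZMod m) (n : ℕ) (b : Fin (k + 1) → ZMod m) :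
    sig m k (-c) n (sig m k c n b) = b := by
  funext j
  simp only [sig]
  split_ifs <;> ring

private lemma telescope (a b : ℕ → ℤ) : ∀ k : ℕ,
    (∀ n, n % 2 = 0 → n + 1 < k → a n = a (n + 1)) →
    (∀ n, n % 2 = 0 → n + 1 < k → b n = b (n + 1)) →
    (∀ n, n % 2 = 0 → n + 1 = k → a n = b n) →
    ∑ n ∈ Finset.range k, (-1 : ℤ) ^ n * (a n - b n) = 0 := by
  intro k
  induction k using Nat.strong_induction_on with
  | _ k ih =>
    match k with
    | 0 => intro _ _ _; simp
    | 1 => intro _ _ h3; rw [Finset.sum_range_one, h3 0 rfl rfl]; ring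
    | (n + 2) =>
      intro h1 h2 h3
      rcases Nat.even_or_odd n with he | ho
      · have hn2 : n % 2 = 0 := Nat.even_iff.mp he
        rw [Finset.sum_range_succ, Finset.sum_range_succ,
          ih n (by omega) (fun t ht hlt => h1 t ht (by omega))
            (fun t ht hlt => h2 t ht (by omega))
            (fun t ht he' => absurd he' (by omega)),
          h1 n hn2 (by omega), h2 n hn2 (by omega), pow_succ]
        ring
      · have hn2 : n % 2 = 1 := Nat.odd_iff.mp ho
        rw [Finset.sum_range_succ,
          ih (n + 1) (by omega) (fun t ht hlt => h1 t ht (by omega))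
            (fun t ht hlt => h2 t ht (by omega))
            (fun t ht he' => absurd he' (by omega)),
          h3 (n + 1) (by omega) rfl]
        ring

private theorem key (m k : ℕ) [NeZero m] (ψ : (Fin k → ZMod m) → ℤ)
    (F : Finset (Fin (k + 1) → ZMod m))
    (hF : ∀ b, b ∈ F ↔ ∀ i : Fin (k + 1), (i : ℕ) % 2 = 0 →
      (if h : (i : ℕ) + 1 < k + 1 then b i = b ⟨(i : ℕ) + 1, h⟩ + 1 else b i = 0)) :
    ∑ b ∈ F, shelfD (fun _ b => b + 1) k ψ b = 0 := by
  -- the shift of a constrained pair preserves membership in F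
  have hmem : ∀ (c : ZMod m) (n : ℕ), n % 2 = 0 → n + 1 ≤ k →
      ∀ b ∈ F, sig m k c n b ∈ F := by
    intro c n hn hnk b hb
    rw [hF] at hb ⊢
    intro t ht
    have hbt := hb t ht
    by_cases h1 : (t : ℕ) = n
    · have hlt : (t : ℕ) + 1 < k + 1 := by omega
      rw [dif_pos hlt] at hbt ⊢
      show sig m k c n b t = sig m k c n b ⟨(t : ℕ) + 1, hlt⟩ + 1
      simp only [sig]
      rw [if_pos (Or.inl h1),
        if_pos (Or.inr (show (t : ℕ) + 1 = n + 1 by omega))]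
      rw [hbt]; ring
    · by_cases h2 : (t : ℕ) = n + 1
      · exact absurd ht (by omega)
      · by_cases hlt : (t : ℕ) + 1 < k + 1
        · rw [dif_pos hlt] at hbt ⊢
          show sig m k c n b t = sig m k c n b ⟨(t : ℕ) + 1, hlt⟩ + 1
          simp only [sig]
          rw [if_neg (not_or.mpr ⟨h1, h2⟩),
            if_neg (show ¬((t : ℕ) + 1 = n ∨ (t : ℕ) + 1 = n + 1) by omega)]
          exact hbt
        · rw [dif_neg hlt] at hbt ⊢
          show sig m k c n b t = 0
          simp only [sig]
          rw [if_neg (not_or.mpr ⟨h1, h2⟩)]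
          exact hbt
  -- pointwise equality of the two "+"-faces at a constrained pair
  have hP : ∀ n : ℕ, n % 2 = 0 → n + 1 < k → ∀ b ∈ F,
      Pm m k n b = Pm m k (n + 1) b := by
    intro n hn hnk b hb
    rw [hF] at hb
    funext j
    simp only [Pm]
    by_cases hj : (j : ℕ) = n
    · rw [if_pos (by omega), if_neg (by omega)]
      have hc := hb j.castSucc (show ((j.castSucc : Fin (k + 1)) : ℕ) % 2 = 0 by
        simp [Fin.coe_castSucc, hj, hn])
      have hlt : ((j.castSucc : Fin (k + 1)) : ℕ) + 1 < k + 1 := by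
        simp only [Fin.coe_castSucc]; omega
      rw [dif_pos hlt] at hc
      have he : (⟨((j.castSucc : Fin (k + 1)) : ℕ) + 1, hlt⟩ : Fin (k + 1)) = j.succ := by
        apply Fin.ext; simp
      rw [he] at hc
      exact hc.symm
    · by_cases hle : n ≤ (j : ℕ)
      · rw [if_pos hle, if_pos (by omega)]
      · rw [if_neg hle, if_neg (by omega)]
  -- the "-" face at `n+1` of the shifted tuple is the "-" face at `n`
  have hQ : ∀ n : ℕ, n % 2 = 0 → n + 1 < k → ∀ b ∈ F,
      Qm m k (n + 1) (sig m k (-1) n b) = Qm m k n b := by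
    intro n hn hnk b hb
    rw [hF] at hb
    funext j
    simp only [Qm, sig, Fin.coe_castSucc, Fin.val_succ]
    rcases lt_trichotomy (j : ℕ) n with hj | hj | hj
    · rw [if_neg (show ¬ n + 1 ≤ (j : ℕ) by omega),
        if_neg (show ¬((j : ℕ) = n ∨ (j : ℕ) = n + 1) by omega),
        if_neg (show ¬ n ≤ (j : ℕ) by omega)]
    · rw [if_neg (show ¬ n + 1 ≤ (j : ℕ) by omega),
        if_pos (Or.inl hj), if_pos (show n ≤ (j : ℕ) by omega)]
      have hc := hb j.castSucc (show ((j.castSucc : Fin (k + 1)) : ℕ) % 2 = 0 by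
        simp [Fin.coe_castSucc, hj, hn])
      have hlt : ((j.castSucc : Fin (k + 1)) : ℕ) + 1 < k + 1 := by
        simp only [Fin.coe_castSucc]; omega
      rw [dif_pos hlt] at hc
      have he : (⟨((j.castSucc : Fin (k + 1)) : ℕ) + 1, hlt⟩ : Fin (k + 1)) = j.succ := by
        apply Fin.ext; simp
      rw [he] at hc
      rw [hc]; ring
    · rw [if_pos (show n + 1 ≤ (j : ℕ) by omega),
        if_neg (show ¬((j : ℕ) + 1 = n ∨ (j : ℕ) + 1 = n + 1) by omega),
        if_pos (show n ≤ (j : ℕ) by omega)]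
  -- the leftover case: the "-" face of the up-shifted tuple is the "+" face
  have hPQ : ∀ n : ℕ, n + 1 = k → ∀ b : Fin (k + 1) → ZMod m,
      Qm m k n (sig m k 1 n b) = Pm m k n b := by
    intro n hnk b
    funext j
    simp only [Qm, Pm, sig, Fin.coe_castSucc, Fin.val_succ]
    by_cases hj : n ≤ (j : ℕ)
    · have hjn : (j : ℕ) = n := by omega
      rw [if_pos hj, if_pos hj, if_pos (Or.inr (by omega))]
    · rw [if_neg hj, if_neg hj,
        if_neg (show ¬((j : ℕ) = n ∨ (j : ℕ) = n + 1) by omega)]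
  set A : ℕ → ℤ := fun n => ∑ b ∈ F, ψ (Pm m k n b) with hAdef
  set B : ℕ → ℤ := fun n => ∑ b ∈ F, ψ (Qm m k n b) with hBdef
  have hA : ∀ n, n % 2 = 0 → n + 1 < k → A n = A (n + 1) := by
    intro n hn hnk
    exact Finset.sum_congr rfl fun b hb => by rw [hP n hn hnk b hb]
  have hB : ∀ n, n % 2 = 0 → n + 1 < k → B n = B (n + 1) := by
    intro n hn hnk
    refine Finset.sum_bij' (fun b _ => sig m k (-1) n b) (fun b _ => sig m k 1 n b)
      (fun b hb => hmem _ n hn (by omega) b hb)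
      (fun b hb => hmem _ n hn (by omega) b hb)
      (fun b hb => by simpa using sig_sig m k (-1) n b)
      (fun b hb => sig_sig m k 1 n b)
      (fun b hb => by rw [hQ n hn hnk b hb])
  have hAB : ∀ n, n % 2 = 0 → n + 1 = k → A n = B n := by
    intro n hn hnk
    refine Finset.sum_bij' (fun b _ => sig m k 1 n b) (fun b _ => sig m k (-1) n b)
      (fun b hb => hmem _ n hn (by omega) b hb)
      (fun b hb => hmem _ n hn (by omega) b hb)
      (fun b hb => sig_sig m k 1 n b)
      (fun b hb => by simpa using sig_sig m k (-1) n b)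
      (fun b hb => by rw [hPQ n hnk b])
  calc ∑ b ∈ F, shelfD (fun _ b => b + 1) k ψ b
      = ∑ b ∈ F, ∑ i : Fin k,
          ((-1 : ℤ) ^ (i : ℕ)) • (ψ (Pm m k (i : ℕ) b) - ψ (Qm m k (i : ℕ) b)) :=
        Finset.sum_congr rfl fun b _ => rfl
    _ = ∑ i : Fin k, ∑ b ∈ F,
          ((-1 : ℤ) ^ (i : ℕ)) • (ψ (Pm m k (i : ℕ) b) - ψ (Qm m k (i : ℕ) b)) :=
        Finset.sum_comm
    _ = ∑ n ∈ Finset.range k, ∑ b ∈ F,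
          ((-1 : ℤ) ^ n) • (ψ (Pm m k n b) - ψ (Qm m k n b)) :=
        Fin.sum_univ_eq_sum_range
          (fun n => ∑ b ∈ F, ((-1 : ℤ) ^ n) • (ψ (Pm m k n b) - ψ (Qm m k n b))) k
    _ = ∑ n ∈ Finset.range k, (-1 : ℤ) ^ n * (A n - B n) := by
        refine Finset.sum_congr rfl fun n _ => ?_
        rw [← Finset.smul_sum, Finset.sum_sub_distrib, smul_eq_mul]
    _ = 0 := telescope A B k hA hB (fun n hn hnk => hAB n hn hnk)

open Classical in
theorem cyclic_rack_coboundary_sum_over_D (m : ℕ) [NeZero m] (k s : ℕ)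
    (hs : k + 1 = 2 * s ∨ k + 1 = 2 * s + 1)
    (ψ : (Fin k → ZMod m) → ℤ) :
    ∑ b ∈ Finset.univ.filter (fun b : Fin (k + 1) → ZMod m =>
        ∀ i : Fin (k + 1), (i : ℕ) % 2 = 0 →
          (if h : (i : ℕ) + 1 < k + 1 then b i = b ⟨(i : ℕ) + 1, h⟩ + 1 else b i = 0)),
      shelfD (fun _ b => b + 1) k ψ b = 0 :=
  key m k ψ _ (fun b => by
    rw [Finset.mem_filter]
    simp only [Finset.mem_univ, true_and])
end

section
/- For the cyclic rack C_{0,m} with m ≥ 1 and k ≥ 0 written as 2s or 2s+1, the constant 1-valued k-cochain φ_const and the cocycle φ⁰ (the indicator of tuples whose even-indexed entries all equal m−1) satisfy: the total sums over all of (ℤ/m)^k are Σ φ_const = m^k and Σ φ⁰ = m^{k−s}, and for every (k−1)-cochain ψ, Σ_{b ∈ (ℤ/m)^k} (d^{k-1}ψ)(b) = 0. Consequently, if φ_const = α·φ⁰ + d^{k-1}ψ for some integer α and some ψ, then α = m^s. -/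
private lemma crcc_prod_ite_pow (m : ℤ) (n : ℕ) :
    (∏ i ∈ Finset.range n, (if i % 2 = 1 then (1 : ℤ) else m)) = m ^ (n - n / 2) := by
  induction n with
  | zero => simp
  | succ n ih =>
    rw [Finset.prod_range_succ, ih]
    rcases Nat.even_or_odd n with h | h
    · have h2 : n % 2 = 0 := Nat.even_iff.mp h
      rw [if_neg (by omega), ← pow_succ]
      congr 1
      omega
    · have h2 : n % 2 = 1 := Nat.odd_iff.mp h
      rw [if_pos h2, mul_one]
      congr 1
      omega

private lemma crcc_sum_fiber (m : ℕ) [NeZero m] (k : ℕ) (p : Fin (k + 1))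
    (φ : (Fin k → ZMod m) → ℤ) :
    ∑ b : Fin (k + 1) → ZMod m, φ (fun j => b (p.succAbove j)) =
      (m : ℤ) * ∑ c : Fin k → ZMod m, φ c := by
  rw [← Equiv.sum_comp (Fin.insertNthEquiv (fun _ => ZMod m) p)
      (fun b => φ (fun j => b (p.succAbove j)))]
  have key : ∀ y : ZMod m × (Fin k → ZMod m),
      φ (fun j => (Fin.insertNthEquiv (fun _ => ZMod m) p) y (p.succAbove j)) = φ y.2 := by
    rintro ⟨x, c⟩
    congr 1
    funext j
    simp [Fin.insertNthEquiv, Fin.insertNth_apply_succAbove]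
  calc ∑ y : ZMod m × (Fin k → ZMod m),
        φ (fun j => (Fin.insertNthEquiv (fun _ => ZMod m) p) y (p.succAbove j))
      = ∑ y : ZMod m × (Fin k → ZMod m), φ y.2 := Finset.sum_congr rfl fun y _ => key y
    _ = (m : ℤ) * ∑ c : Fin k → ZMod m, φ c := by
        rw [Fintype.sum_prod_type]
        simp [Finset.sum_const, Finset.card_univ, ZMod.card, mul_comm]

private lemma crcc_sum_translate (m : ℕ) [NeZero m] (k : ℕ) (t : Fin k → ZMod m)
    (φ : (Fin k → ZMod m) → ℤ) :
    ∑ c : Fin k → ZMod m, φ (fun j => c j + t j) = ∑ c : Fin k → ZMod m, φ c :=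
  Equiv.sum_comp (Equiv.piCongrRight fun j => Equiv.addRight (t j)) φ

/-- For the cyclic rack `C_{0,m}` in degree `k+1` (written `2s` or `2s+1`):
the constant cochain `φ_const = 1` has total sum `m^(k+1)`, the cocycle `φ⁰`
(indicator of tuples whose even-indexed entries equal `m−1`) has total sum `m^(k+1−s)`,
every coboundary has total sum `0`; consequently if `φ_const = α·φ⁰ + dψ` then `α = m^s`. -/
theorem cyclic_rack_constant_class (m : ℕ) [NeZero m] (k s : ℕ)
    (hs : k + 1 = 2 * s ∨ k + 1 = 2 * s + 1) :
    (∑ _b : Fin (k + 1) → ZMod m, (1 : ℤ)) = (m : ℤ) ^ (k + 1) ∧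
    (∑ b : Fin (k + 1) → ZMod m,
        (if ∀ i : Fin (k + 1), (i : ℕ) % 2 = 1 → b i = ((m - 1 : ℕ) : ZMod m)
         then (1 : ℤ) else 0)) = (m : ℤ) ^ (k + 1 - s) ∧
    (∀ ψ : (Fin k → ZMod m) → ℤ,
      ∑ b : Fin (k + 1) → ZMod m, shelfD (fun _ b => b + 1) k ψ b = 0) ∧
    (∀ (α : ℤ) (ψ : (Fin k → ZMod m) → ℤ),
      (∀ b : Fin (k + 1) → ZMod m,
        (1 : ℤ) = α * (if ∀ i : Fin (k + 1), (i : ℕ) % 2 = 1 →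
              b i = ((m - 1 : ℕ) : ZMod m) then (1 : ℤ) else 0)
          + shelfD (fun _ b => b + 1) k ψ b) →
      α = (m : ℤ) ^ s) := by
  have h1 : (∑ _b : Fin (k + 1) → ZMod m, (1 : ℤ)) = (m : ℤ) ^ (k + 1) := by
    rw [Finset.sum_const, Finset.card_univ]
    simp [ZMod.card]
  set c : ZMod m := ((m - 1 : ℕ) : ZMod m) with hc
  have h2 : (∑ b : Fin (k + 1) → ZMod m,
      (if ∀ i : Fin (k + 1), (i : ℕ) % 2 = 1 → b i = c
       then (1 : ℤ) else 0)) = (m : ℤ) ^ (k + 1 - s) := by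
    have key : ∀ b : Fin (k + 1) → ZMod m,
        (if ∀ i : Fin (k + 1), (i : ℕ) % 2 = 1 → b i = c then (1 : ℤ) else 0) =
        ∏ i : Fin (k + 1), (if (i : ℕ) % 2 = 1 then (if b i = c then (1 : ℤ) else 0) else 1) := by
      intro b
      by_cases h : ∀ i : Fin (k + 1), (i : ℕ) % 2 = 1 → b i = c
      · rw [if_pos h]
        symm
        apply Finset.prod_eq_one
        intro i _
        by_cases hi : (i : ℕ) % 2 = 1
        · rw [if_pos hi, if_pos (h i hi)]
        · rw [if_neg hi]
      · rw [if_neg h]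
        push_neg at h
        obtain ⟨i, hi1, hi2⟩ := h
        symm
        refine Finset.prod_eq_zero (Finset.mem_univ i) ?_
        rw [if_pos hi1, if_neg hi2]
    have fub := Finset.prod_univ_sum (κ := fun _ : Fin (k + 1) => ZMod m)
      (fun _ => (Finset.univ : Finset (ZMod m)))
      (fun i x => (if (i : ℕ) % 2 = 1 then (if x = c then (1 : ℤ) else 0) else 1))
    rw [Fintype.piFinset_univ] at fub
    have inner : ∀ i : Fin (k + 1),
        (∑ x : ZMod m, (if (i : ℕ) % 2 = 1 then (if x = c then (1 : ℤ) else 0) else 1)) =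
        (if (i : ℕ) % 2 = 1 then (1 : ℤ) else (m : ℤ)) := by
      intro i
      by_cases hi : (i : ℕ) % 2 = 1
      · simp [hi]
      · simp [hi, ZMod.card]
    calc ∑ b : Fin (k + 1) → ZMod m,
          (if ∀ i : Fin (k + 1), (i : ℕ) % 2 = 1 → b i = c then (1 : ℤ) else 0)
        = ∑ b : Fin (k + 1) → ZMod m, ∏ i : Fin (k + 1),
            (if (i : ℕ) % 2 = 1 then (if b i = c then (1 : ℤ) else 0) else 1) :=
          Finset.sum_congr rfl fun b _ => key b
      _ = ∏ i : Fin (k + 1), ∑ x : ZMod m,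
            (if (i : ℕ) % 2 = 1 then (if x = c then (1 : ℤ) else 0) else 1) := fub.symm
      _ = ∏ i : Fin (k + 1), (if (i : ℕ) % 2 = 1 then (1 : ℤ) else (m : ℤ)) :=
          Finset.prod_congr rfl fun i _ => inner i
      _ = ∏ i ∈ Finset.range (k + 1), (if i % 2 = 1 then (1 : ℤ) else (m : ℤ)) :=
          Fin.prod_univ_eq_prod_range (fun i => if i % 2 = 1 then (1 : ℤ) else (m : ℤ)) (k + 1)
      _ = (m : ℤ) ^ ((k + 1) - (k + 1) / 2) := crcc_prod_ite_pow (m : ℤ) (k + 1)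
      _ = (m : ℤ) ^ (k + 1 - s) := by
          have he : (k + 1) - (k + 1) / 2 = k + 1 - s := by clear * - hs; omega
          rw [he]
  have h3 : ∀ ψ : (Fin k → ZMod m) → ℤ,
      ∑ b : Fin (k + 1) → ZMod m, shelfD (fun _ b => b + 1) k ψ b = 0 := by
    intro ψ
    unfold shelfD
    rw [Finset.sum_comm]
    refine Finset.sum_eq_zero fun i _ => ?_
    have hidx : ∀ j : Fin k, Fin.succAbove i.castSucc j =
        if (i : ℕ) ≤ (j : ℕ) then j.succ else j.castSucc := by
      intro j
      rcases le_or_gt (i : ℕ) (j : ℕ) with h | h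
      · rw [if_pos h, Fin.succAbove_of_le_castSucc]
        rw [Fin.castSucc_le_castSucc_iff, Fin.le_def]
        exact h
      · have hnle : ¬ ((i : ℕ) ≤ (j : ℕ)) := by clear * - h; omega
        rw [if_neg hnle, Fin.succAbove_of_castSucc_lt]
        rw [Fin.castSucc_lt_castSucc_iff, Fin.lt_def]
        exact h
    have hsucc : ∀ (b : Fin (k + 1) → ZMod m) (j : Fin k),
        (if (i : ℕ) ≤ (j : ℕ) then b j.succ else b j.castSucc) =
          b (Fin.succAbove i.castSucc j) := by
      intro b j
      rw [hidx j]
      exact (apply_ite b _ _ _).symm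
    have e1 : ∑ b : Fin (k + 1) → ZMod m,
        ψ (fun j => if (i : ℕ) ≤ (j : ℕ) then b j.succ + 1 else b j.castSucc) =
        (m : ℤ) * ∑ c : Fin k → ZMod m, ψ c := by
      have step : ∀ b : Fin (k + 1) → ZMod m,
          ψ (fun j => if (i : ℕ) ≤ (j : ℕ) then b j.succ + 1 else b j.castSucc) =
          (fun v : Fin k → ZMod m =>
            ψ (fun j => v j + (if (i : ℕ) ≤ (j : ℕ) then 1 else 0)))
            (fun j => b (Fin.succAbove i.castSucc j)) := by
        intro b
        show ψ _ = ψ _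
        congr 1
        funext j
        show (if (i : ℕ) ≤ (j : ℕ) then b j.succ + 1 else b j.castSucc) =
          b (Fin.succAbove i.castSucc j) + (if (i : ℕ) ≤ (j : ℕ) then 1 else 0)
        rw [← hsucc b j]
        by_cases h : (i : ℕ) ≤ (j : ℕ) <;> simp [h]
      calc ∑ b : Fin (k + 1) → ZMod m,
            ψ (fun j => if (i : ℕ) ≤ (j : ℕ) then b j.succ + 1 else b j.castSucc)
          = ∑ b : Fin (k + 1) → ZMod m, (fun v : Fin k → ZMod m =>
              ψ (fun j => v j + (if (i : ℕ) ≤ (j : ℕ) then 1 else 0)))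
              (fun j => b (Fin.succAbove i.castSucc j)) :=
            Finset.sum_congr rfl fun b _ => step b
        _ = (m : ℤ) * ∑ v : Fin k → ZMod m,
              ψ (fun j => v j + (if (i : ℕ) ≤ (j : ℕ) then 1 else 0)) :=
            crcc_sum_fiber m k i.castSucc
              (fun v => ψ (fun j => v j + (if (i : ℕ) ≤ (j : ℕ) then 1 else 0)))
        _ = (m : ℤ) * ∑ c : Fin k → ZMod m, ψ c := by
            rw [crcc_sum_translate m k (fun j => if (i : ℕ) ≤ (j : ℕ) then 1 else 0) ψ]
    have e2 : ∑ b : Fin (k + 1) → ZMod m,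
        ψ (fun j => if (i : ℕ) ≤ (j : ℕ) then b j.succ else b j.castSucc) =
        (m : ℤ) * ∑ c : Fin k → ZMod m, ψ c := by
      calc ∑ b : Fin (k + 1) → ZMod m,
            ψ (fun j => if (i : ℕ) ≤ (j : ℕ) then b j.succ else b j.castSucc)
          = ∑ b : Fin (k + 1) → ZMod m, ψ (fun j => b (Fin.succAbove i.castSucc j)) :=
            Finset.sum_congr rfl fun b _ => by
              show ψ _ = ψ _
              congr 1
              funext j
              exact hsucc b j
        _ = (m : ℤ) * ∑ c : Fin k → ZMod m, ψ c := crcc_sum_fiber m k i.castSucc ψ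
    rw [← Finset.smul_sum, Finset.sum_sub_distrib, e1, e2, sub_self, smul_zero]
  refine ⟨h1, h2, h3, ?_⟩
  intro α ψ h
  have hsum : (∑ _b : Fin (k + 1) → ZMod m, (1 : ℤ)) =
      ∑ b : Fin (k + 1) → ZMod m,
        (α * (if ∀ i : Fin (k + 1), (i : ℕ) % 2 = 1 → b i = c then (1 : ℤ) else 0)
          + shelfD (fun _ b => b + 1) k ψ b) :=
    Finset.sum_congr rfl fun b _ => h b
  rw [h1] at hsum
  rw [Finset.sum_add_distrib] at hsum
  rw [← Finset.mul_sum] at hsum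
  rw [h2] at hsum
  rw [h3 ψ] at hsum
  rw [add_zero] at hsum
  have hes : s + (k + 1 - s) = k + 1 := by clear * - hs; omega
  have hpow : (m : ℤ) ^ (k + 1) = (m : ℤ) ^ s * (m : ℤ) ^ (k + 1 - s) := by
    rw [← pow_add, hes]
  have hne : ((m : ℤ) ^ (k + 1 - s)) ≠ 0 := by
    apply pow_ne_zero
    exact_mod_cast (NeZero.ne m)
  exact mul_right_cancel₀ hne (by linarith [hsum, hpow])
end
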